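/- Let ν ≥ 2 be a natural number and let x > 1 be a real number. The derivative of g(x) = (ν/x)·(1 − 1/x)^(ν−1) at x equals 0 if and only if x = ν. -/

import Mathlib

/-- The derivative of `g(x) = (ν/x)·(1 − 1/x)^(ν−1)` vanishes at a point `x > 1`
if and only if `x = ν`. -/
theorem pima_frame_efficiency_stationary_point (ν : ℕ) (hν : 2 ≤ ν) (x : ℝ) (hx : 1 < x) :
    deriv (fun y : ℝ => (ν : ℝ) / y * (1 - 1 / y) ^ (ν - 1)) x = 0 ↔ x = ν := by
  have hx0 : (0:ℝ) < x := lt_trans one_pos hx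
  have hxne : x ≠ 0 := hx0.ne'
  have hc : (0:ℝ) < 1 - 1/x := by
    have : 1/x < 1 := by rw [div_lt_one hx0]; exact hx
    linarith
  have hinner : HasDerivAt (fun y : ℝ => 1 - 1/y) ((x^2)⁻¹) x := by
    simpa [one_div] using ((hasDerivAt_inv hxne).const_sub 1)
  have hpow : HasDerivAt (fun y : ℝ => (1 - 1/y) ^ (ν - 1)) _ x := hinner.pow (ν - 1)
  have hfrac : HasDerivAt (fun y : ℝ => (ν:ℝ)/y) ((ν:ℝ) * (-(x^2)⁻¹)) x := by
    simpa [div_eq_mul_inv] using ((hasDerivAt_inv hxne).const_mul (ν:ℝ))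
  have hD : HasDerivAt (fun y : ℝ => (ν:ℝ) / y * (1 - 1/y) ^ (ν - 1)) _ x := hfrac.mul hpow
  rw [hD.deriv]
  have hsub : ν - 1 - 1 = ν - 2 := by omega
  have hsucc : ν - 1 = (ν - 2) + 1 := by omega
  have hcast : ((ν - 1 : ℕ) : ℝ) = (ν : ℝ) - 1 := by
    have : (1:ℕ) ≤ ν := by omega
    push_cast [Nat.cast_sub this]; ring
  have key : (ν:ℝ) * (-(x^2)⁻¹) * (1 - 1/x) ^ (ν - 1)
      + (ν:ℝ)/x * (((ν - 1 : ℕ):ℝ) * (1 - 1/x) ^ (ν - 1 - 1) * (x^2)⁻¹)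
      = ((ν:ℝ) / x^2 * (1 - 1/x) ^ (ν - 2)) * ((ν:ℝ)/x - 1) := by
    rw [hsub, hcast, show (1 - 1/x) ^ (ν - 1) = (1 - 1/x) ^ (ν - 2) * (1 - 1/x) from by rw [hsucc, pow_succ]]
    field_simp
    ring
  rw [key]
  have hK : (0:ℝ) < (ν:ℝ) / x^2 * (1 - 1/x) ^ (ν - 2) := by
    have hν0 : (0:ℝ) < (ν:ℝ) := by exact_mod_cast (by omega : 0 < ν)
    positivity
  rw [mul_eq_zero]
  constructor
  · rintro (h | h)
    · exact absurd h hK.ne'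
    · have : (ν:ℝ)/x = 1 := by linarith
      rw [div_eq_one_iff_eq hxne] at this
      exact this.symm
  · rintro rfl
    right
    rw [div_self hxne]
    ring
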